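/- For all y, y', η, η' ∈ ℝ³, one has |y ∧ η|² / (1 + |y'|² + |η'|² + |y' ∧ η'|²) ≤ 10 (⟨y − y'⟩ + ⟨η − η'⟩)^4, where ∧ is the cross product and ⟨x⟩ = (1+|x|²)^{1/2}. -/

import Mathlib

/-- Cross product on `ℝ³` (Euclidean). -/
noncomputable def cross3 (u w : EuclideanSpace ℝ (Fin 3)) : EuclideanSpace ℝ (Fin 3) :=
  (WithLp.equiv 2 (Fin 3 → ℝ)).symm
    ![u 1 * w 2 - u 2 * w 1, u 2 * w 0 - u 0 * w 2, u 0 * w 1 - u 1 * w 0]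

lemma cross3_apply (u w : EuclideanSpace ℝ (Fin 3)) (i : Fin 3) :
    cross3 u w i = ![u 1 * w 2 - u 2 * w 1, u 2 * w 0 - u 0 * w 2, u 0 * w 1 - u 1 * w 0] i := by
  simp [cross3]

lemma normsq3 (x : EuclideanSpace ℝ (Fin 3)) : ‖x‖ ^ 2 = x 0 ^ 2 + x 1 ^ 2 + x 2 ^ 2 := by
  rw [EuclideanSpace.norm_eq, Real.sq_sqrt (by positivity)]
  simp [Fin.sum_univ_three]

lemma cross3_add_left (u v w : EuclideanSpace ℝ (Fin 3)) :
    cross3 (u + v) w = cross3 u w + cross3 v w := by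
  ext i
  have h : ∀ a b : EuclideanSpace ℝ (Fin 3), ∀ j, (a + b) j = a j + b j := fun _ _ _ => rfl
  rw [h, cross3_apply, cross3_apply, cross3_apply]
  have h0 : ∀ j : Fin 3, (u + v) j = u j + v j := fun j => rfl
  fin_cases i <;> simp [h0] <;> ring

lemma cross3_add_right (u v w : EuclideanSpace ℝ (Fin 3)) :
    cross3 u (v + w) = cross3 u v + cross3 u w := by
  ext i
  have h : ∀ a b : EuclideanSpace ℝ (Fin 3), ∀ j, (a + b) j = a j + b j := fun _ _ _ => rfl
  rw [h, cross3_apply, cross3_apply, cross3_apply]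
  have h0 : ∀ j : Fin 3, (v + w) j = v j + w j := fun j => rfl
  fin_cases i <;> simp [h0] <;> ring

lemma cross3_norm_le (u w : EuclideanSpace ℝ (Fin 3)) : ‖cross3 u w‖ ≤ ‖u‖ * ‖w‖ := by
  have h : ‖cross3 u w‖ ^ 2 ≤ (‖u‖ * ‖w‖) ^ 2 := by
    have e : (‖u‖ * ‖w‖) ^ 2 = ‖u‖ ^ 2 * ‖w‖ ^ 2 := by ring
    rw [normsq3, e, normsq3, normsq3, cross3_apply, cross3_apply, cross3_apply]
    simp only [Matrix.cons_val_zero, Matrix.cons_val_one, Matrix.head_cons,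
      Matrix.cons_val_two, Matrix.tail_cons]
    nlinarith [sq_nonneg (u 0 * w 0 + u 1 * w 1 + u 2 * w 2)]
  calc ‖cross3 u w‖ = Real.sqrt (‖cross3 u w‖ ^ 2) := (Real.sqrt_sq (norm_nonneg _)).symm
    _ ≤ Real.sqrt ((‖u‖ * ‖w‖) ^ 2) := Real.sqrt_le_sqrt h
    _ = ‖u‖ * ‖w‖ := Real.sqrt_sq (by positivity)

set_option maxHeartbeats 1000000 in
/-- `|y∧η|²/(1+|y'|²+|η'|²+|y'∧η'|²) ≤ 10 (⟨y-y'⟩ + ⟨η-η'⟩)⁴`. -/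
theorem cross_ratio_bound (y y' η η' : EuclideanSpace ℝ (Fin 3)) :
    ‖cross3 y η‖ ^ 2 / (1 + ‖y'‖ ^ 2 + ‖η'‖ ^ 2 + ‖cross3 y' η'‖ ^ 2) ≤
      10 * (Real.sqrt (1 + ‖y - y'‖ ^ 2) + Real.sqrt (1 + ‖η - η'‖ ^ 2)) ^ 4 := by
  set a := y - y' with ha
  set b := η - η' with hb
  set D := 1 + ‖y'‖ ^ 2 + ‖η'‖ ^ 2 + ‖cross3 y' η'‖ ^ 2 with hD
  set A := Real.sqrt (1 + ‖a‖ ^ 2) with hAdef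
  set B := Real.sqrt (1 + ‖b‖ ^ 2) with hBdef
  have hDpos : 0 < D := by positivity
  have hA2 : A ^ 2 = 1 + ‖a‖ ^ 2 := Real.sq_sqrt (by positivity)
  have hB2 : B ^ 2 = 1 + ‖b‖ ^ 2 := Real.sq_sqrt (by positivity)
  have hA0 : 0 ≤ A := Real.sqrt_nonneg _
  have hB0 : 0 ≤ B := Real.sqrt_nonneg _
  set s := Real.sqrt D with hs
  have hs2 : s ^ 2 = D := Real.sq_sqrt hDpos.le
  have hs0 : 0 ≤ s := Real.sqrt_nonneg _
  have hs1 : 1 ≤ s := by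
    nlinarith [sq_nonneg ‖y'‖, sq_nonneg ‖η'‖, sq_nonneg ‖cross3 y' η'‖]
  have hy's : ‖y'‖ ≤ s := by nlinarith [norm_nonneg y']
  have hη's : ‖η'‖ ≤ s := by nlinarith [norm_nonneg η']
  have hcs : ‖cross3 y' η'‖ ≤ s := by nlinarith [norm_nonneg (cross3 y' η')]
  have hya : y = a + y' := by rw [ha]; abel
  have hηb : η = b + η' := by rw [hb]; abel
  have hdec : cross3 y η =
      cross3 a b + cross3 a η' + (cross3 y' b + cross3 y' η') := by
    rw [hya, hηb, cross3_add_left, cross3_add_right, cross3_add_right]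
  have hn : ‖cross3 y η‖ ≤ ‖a‖ * ‖b‖ + ‖a‖ * ‖η'‖ + (‖y'‖ * ‖b‖ + ‖cross3 y' η'‖) := by
    rw [hdec]
    calc ‖cross3 a b + cross3 a η' + (cross3 y' b + cross3 y' η')‖
        ≤ ‖cross3 a b + cross3 a η'‖ + ‖cross3 y' b + cross3 y' η'‖ := norm_add_le _ _
      _ ≤ ‖cross3 a b‖ + ‖cross3 a η'‖ + (‖cross3 y' b‖ + ‖cross3 y' η'‖) :=
          add_le_add (norm_add_le _ _) (norm_add_le _ _)
      _ ≤ ‖a‖ * ‖b‖ + ‖a‖ * ‖η'‖ + (‖y'‖ * ‖b‖ + ‖cross3 y' η'‖) :=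
          add_le_add (add_le_add (cross3_norm_le a b) (cross3_norm_le a η'))
            (add_le_add (cross3_norm_le y' b) le_rfl)
  have hkey : ‖cross3 y η‖ ≤ s * ((1 + ‖a‖) * (1 + ‖b‖)) := by
    have h1 : ‖a‖ * ‖b‖ ≤ s * (‖a‖ * ‖b‖) :=
      le_mul_of_one_le_left (by positivity) hs1
    have h2 : ‖a‖ * ‖η'‖ ≤ ‖a‖ * s := mul_le_mul_of_nonneg_left hη's (norm_nonneg a)
    have h3 : ‖y'‖ * ‖b‖ ≤ s * ‖b‖ := mul_le_mul_of_nonneg_right hy's (norm_nonneg b)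
    have e : s * ((1 + ‖a‖) * (1 + ‖b‖)) = s * (‖a‖ * ‖b‖) + ‖a‖ * s + (s * ‖b‖ + s) := by
      ring
    rw [e]
    exact hn.trans (add_le_add (add_le_add h1 h2) (add_le_add h3 hcs))
  have hsq : ‖cross3 y η‖ ^ 2 ≤ (s * ((1 + ‖a‖) * (1 + ‖b‖))) ^ 2 :=
    pow_le_pow_left₀ (norm_nonneg _) hkey 2
  have h5 : ‖cross3 y η‖ ^ 2 ≤ D * ((1 + ‖a‖) ^ 2 * (1 + ‖b‖) ^ 2) := by
    have e : (s * ((1 + ‖a‖) * (1 + ‖b‖))) ^ 2 = s ^ 2 * ((1 + ‖a‖) ^ 2 * (1 + ‖b‖) ^ 2) := by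
      ring
    rw [e, hs2] at hsq
    exact hsq
  have h6 : (1 + ‖a‖) ^ 2 ≤ 2 * A ^ 2 := by nlinarith [sq_nonneg (1 - ‖a‖)]
  have h7 : (1 + ‖b‖) ^ 2 ≤ 2 * B ^ 2 := by nlinarith [sq_nonneg (1 - ‖b‖)]
  have h8 : ‖cross3 y η‖ ^ 2 ≤ D * (4 * (A ^ 2 * B ^ 2)) := by
    refine h5.trans ?_
    have : (1 + ‖a‖) ^ 2 * (1 + ‖b‖) ^ 2 ≤ 2 * A ^ 2 * (2 * B ^ 2) :=
      mul_le_mul h6 h7 (sq_nonneg _) (by positivity)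
    nlinarith [hDpos.le]
  have h9 : 4 * (A ^ 2 * B ^ 2) ≤ 10 * (A + B) ^ 4 := by
    nlinarith [sq_nonneg (A - B), mul_nonneg hA0 hB0, sq_nonneg ((A - B) * (A + B)),
      sq_nonneg (A * B), sq_nonneg (A + B)]
  rw [div_le_iff₀ hDpos]
  calc ‖cross3 y η‖ ^ 2 ≤ D * (4 * (A ^ 2 * B ^ 2)) := h8
    _ ≤ D * (10 * (A + B) ^ 4) := mul_le_mul_of_nonneg_left h9 hDpos.le
    _ = 10 * (A + B) ^ 4 * D := by ring
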